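/- arXiv:1902.07548 — 2 statements merged into one kernel-verified Lean document; each statement's English description precedes it below -/
import Mathlib

section
/- Let G be a finite simple graph on n vertices with m ≥ 1 edges. For real parameters q with 0 < q < 1 and r ≠ 1, the Sharma–Mittal entropy of G based on the signless Laplacian satisfies H_{q,r}(G) ≤ (1/(1−r))·[(n·(√(4m + 2(n−1)(n−2))/(2m))^q)^{(1−r)/(1−q)} − 1]. -/
open Finset

namespace SMG

variable {V : Type*} [Fintype V] [DecidableEq V]

/-- The degree sum of a graph. -/
def degSum (G : SimpleGraph V) [DecidableRel G.Adj] : ℕ := ∑ v, G.degree v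

/-- The signless Laplacian matrix `Q(G) = D(G) + A(G)` of a simple graph. -/
def signlessLapMatrix (G : SimpleGraph V) [DecidableRel G.Adj] : Matrix V V ℝ :=
  G.degMatrix ℝ + G.adjMatrix ℝ

/-- The signless Laplacian matrix of a simple graph is Hermitian. -/
lemma signlessLap_isHermitian (G : SimpleGraph V) [DecidableRel G.Adj] :
    (signlessLapMatrix G).IsHermitian := by
  refine Matrix.IsHermitian.add ?_ ?_
  · exact Matrix.isHermitian_diagonal _
  · rw [Matrix.IsHermitian, Matrix.conjTranspose_eq_transpose_of_trivial]
    exact G.isSymm_adjMatrix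

/-- The eigenvalues (with multiplicity) of the density matrix `ρ_Q(G) = Q(G)/d`,
namely `γ v = μ v / d`. -/
noncomputable def signlessLapDensityEigen (G : SimpleGraph V) [DecidableRel G.Adj] : V → ℝ :=
  fun v => (signlessLap_isHermitian G).eigenvalues v / (degSum G : ℝ)

/-- Sharma–Mittal entropy of a graph based on its signless Laplacian:
`H_{q,r}(G) = (1/(1-r)) * ((Σ γᵢ^q)^((1-r)/(1-q)) - 1)` with real powers. -/
noncomputable def signlessLapSM (G : SimpleGraph V) [DecidableRel G.Adj] (q r : ℝ) : ℝ :=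
  (1 / (1 - r)) *
    ((∑ v, signlessLapDensityEigen G v ^ q) ^ ((1 - r) / (1 - q)) - 1)

lemma sum_eigenvalues_eq_trace' {n : Type*} [Fintype n] [DecidableEq n]
    {A : Matrix n n ℝ} (hA : A.IsHermitian) :
    ∑ i, hA.eigenvalues i = A.trace := by
  rw [hA.trace_eq_sum_eigenvalues]
  simp

open Matrix in
lemma signlessLap_eq_inc (G : SimpleGraph V) [DecidableRel G.Adj] :
    signlessLapMatrix G = G.incMatrix ℝ * (G.incMatrix ℝ)ᵀ := by
  rw [G.incMatrix_mul_transpose]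
  ext a b
  simp only [signlessLapMatrix, SimpleGraph.degMatrix, Matrix.add_apply,
    Matrix.diagonal_apply, SimpleGraph.adjMatrix_apply]
  split_ifs with h h' <;> simp_all [G.irrefl]
  rw [h]

lemma signlessLap_posSemidef (G : SimpleGraph V) [DecidableRel G.Adj] :
    (signlessLapMatrix G).PosSemidef := by
  rw [signlessLap_eq_inc, ← Matrix.conjTranspose_eq_transpose_of_trivial]
  exact Matrix.posSemidef_self_mul_conjTranspose _

lemma trace_signlessLap (G : SimpleGraph V) [DecidableRel G.Adj] :
    (signlessLapMatrix G).trace = (degSum G : ℝ) := by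
  simp [signlessLapMatrix, Matrix.trace_add, SimpleGraph.degMatrix, Matrix.trace_diagonal,
    degSum]

/-- Upper bound on the Sharma–Mittal entropy (signless Laplacian), for `0 < q < 1`:
`H_{q,r}(G) ≤ (1/(1−r))·[(n·(√(4m + 2(n−1)(n−2))/(2m))^q)^{(1−r)/(1−q)} − 1]`. -/
theorem signlessLapSM_le (G : SimpleGraph V) [DecidableRel G.Adj]
    (m : ℕ) (hm : m = G.edgeFinset.card) (hm1 : 1 ≤ m)
    (q r : ℝ) (hq0 : 0 < q) (hq1 : q < 1) (hr : r ≠ 1) :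
    signlessLapSM G q r ≤
      (1 / (1 - r)) *
        (((Fintype.card V : ℝ) *
            (Real.sqrt (4 * m + 2 * ((Fintype.card V : ℝ) - 1) * ((Fintype.card V : ℝ) - 2)) /
              (2 * m)) ^ q) ^ ((1 - r) / (1 - q)) - 1) := by
  classical
  set n : ℕ := Fintype.card V with hn
  set γ : V → ℝ := signlessLapDensityEigen G with hγ
  set B : ℝ := Real.sqrt (4 * m + 2 * ((n : ℝ) - 1) * ((n : ℝ) - 2)) with hB
  have hm0 : (0 : ℝ) < m := by exact_mod_cast hm1
  have hd0 : (0 : ℝ) < 2 * m := by linarith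
  -- n ≥ 2
  have hmn : m ≤ n.choose 2 := hm ▸ G.card_edgeFinset_le_card_choose_two
  have hn2 : 2 ≤ n := by
    by_contra h
    push_neg at h
    have : n.choose 2 = 0 := Nat.choose_eq_zero_of_lt h
    omega
  have hn0 : (0 : ℝ) < n := by
    have : (0:ℕ) < n := by omega
    exact_mod_cast this
  have hn1 : (1:ℝ) ≤ (n:ℝ) - 1 := by
    have : (2:ℝ) ≤ n := by exact_mod_cast hn2
    linarith
  -- degree sum
  have hdeg : (degSum G : ℝ) = 2 * m := by
    have : degSum G = 2 * m := by
      rw [degSum, G.sum_degrees_eq_twice_card_edges, hm]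
    rw [this]; push_cast; ring
  -- eigenvalue facts
  have hγ_nonneg : ∀ v, 0 ≤ γ v := fun v => by
    have h1 : 0 ≤ (signlessLap_isHermitian G).eigenvalues v :=
      (signlessLap_posSemidef G).eigenvalues_nonneg v
    have h2 : 0 ≤ (degSum G : ℝ) := by rw [hdeg]; linarith
    exact div_nonneg h1 h2
  have hγ_sum : ∑ v, γ v = 1 := by
    have : ∑ v, (signlessLap_isHermitian G).eigenvalues v = (degSum G : ℝ) := by
      rw [sum_eigenvalues_eq_trace' (signlessLap_isHermitian G), trace_signlessLap]
    simp only [hγ, signlessLapDensityEigen, ← Finset.sum_div, this]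
    rw [div_self (by rw [hdeg]; positivity)]
  -- Jensen (concavity of x ^ q)
  have hconc := Real.concaveOn_rpow hq0.le hq1.le
  have hw : ∑ _v : V, (n : ℝ)⁻¹ = 1 := by
    rw [Finset.sum_const, Finset.card_univ, ← hn, nsmul_eq_mul, mul_inv_cancel₀ hn0.ne']
  have hjen : ∑ v, (n : ℝ)⁻¹ • (γ v ^ q) ≤ (∑ v, (n : ℝ)⁻¹ • γ v) ^ q :=
    hconc.le_map_sum (fun _ _ => by positivity) hw (fun v _ => hγ_nonneg v)
  have hsum_inv : (∑ v, (n : ℝ)⁻¹ • γ v) = (n : ℝ)⁻¹ := by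
    simp only [smul_eq_mul, ← Finset.mul_sum, hγ_sum, mul_one]
  have hjen' : ∑ v, γ v ^ q ≤ (n : ℝ) * ((n : ℝ)⁻¹) ^ q := by
    rw [hsum_inv] at hjen
    simp only [smul_eq_mul, ← Finset.mul_sum] at hjen
    calc ∑ v, γ v ^ q = (n : ℝ) * ((n : ℝ)⁻¹ * ∑ v, γ v ^ q) := by
          field_simp
      _ ≤ (n : ℝ) * ((n : ℝ)⁻¹) ^ q := by
          exact mul_le_mul_of_nonneg_left hjen hn0.le
  -- 1/n ≤ B / (2m)
  have hmn2 : (m : ℝ) ≤ (n : ℝ) * (n : ℝ) := by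
    have h1 : n.choose 2 ≤ n * n := by
      calc n.choose 2 = n * (n - 1) / 2 := Nat.choose_two_right n
        _ ≤ n * (n - 1) := Nat.div_le_self _ _
        _ ≤ n * n := Nat.mul_le_mul_left n (Nat.sub_le n 1)
    have := le_trans hmn h1
    exact_mod_cast this
  have hBnn : 0 ≤ B := Real.sqrt_nonneg _
  have h2mnB : (2 * m : ℝ) ≤ (n : ℝ) * B := by
    have h4 : Real.sqrt (4 * m) ≤ B := by
      apply Real.sqrt_le_sqrt
      nlinarith
    have hkey : (2 * m : ℝ) ≤ (n : ℝ) * Real.sqrt (4 * m) := by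
      have h1 : (2 * m : ℝ) = Real.sqrt ((2 * m) ^ 2) := (Real.sqrt_sq hd0.le).symm
      have h2 : Real.sqrt ((2 * m) ^ 2) ≤ Real.sqrt ((n : ℝ) ^ 2 * (4 * m)) := by
        apply Real.sqrt_le_sqrt
        nlinarith
      have h3 : Real.sqrt ((n : ℝ) ^ 2 * (4 * m)) = (n : ℝ) * Real.sqrt (4 * m) := by
        rw [Real.sqrt_mul (sq_nonneg _), Real.sqrt_sq hn0.le]
      linarith [h1 ▸ h2, h3 ▸ h2]
    calc (2 * m : ℝ) ≤ (n : ℝ) * Real.sqrt (4 * m) := hkey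
      _ ≤ (n : ℝ) * B := mul_le_mul_of_nonneg_left h4 hn0.le
  have hinvB : (n : ℝ)⁻¹ ≤ B / (2 * m) := by
    rw [le_div_iff₀ hd0, inv_mul_le_iff₀ hn0]
    linarith
  -- combine: Σ γ^q ≤ n * (B/(2m))^q
  have ht12 : ∑ v, γ v ^ q ≤ (n : ℝ) * (B / (2 * m)) ^ q := by
    refine hjen'.trans (mul_le_mul_of_nonneg_left ?_ hn0.le)
    exact Real.rpow_le_rpow (by positivity) hinvB hq0.le
  -- positivity of Σ γ^q
  have hpos1 : 0 < ∑ v, γ v ^ q := by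
    obtain ⟨v, hv⟩ : ∃ v, 0 < γ v := by
      by_contra h
      push_neg at h
      have : ∑ v, γ v ≤ 0 := Finset.sum_nonpos fun v _ => h v
      linarith [hγ_sum]
    exact Finset.sum_pos' (fun w _ => Real.rpow_nonneg (hγ_nonneg w) q)
      ⟨v, Finset.mem_univ v, Real.rpow_pos_of_pos hv q⟩
  have hpos2 : 0 < (n : ℝ) * (B / (2 * m)) ^ q := by
    have hB0 : 0 < B := Real.sqrt_pos.mpr (by nlinarith)
    positivity
  -- final monotonicity
  rw [signlessLapSM]
  rcases lt_or_gt_of_ne hr with hrl | hrg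
  · have he : 0 ≤ (1 - r) / (1 - q) := by
      apply div_nonneg <;> linarith
    have := Real.rpow_le_rpow hpos1.le ht12 he
    have hc : 0 ≤ 1 / (1 - r) := by
      apply div_nonneg <;> linarith
    exact mul_le_mul_of_nonneg_left (by linarith) hc
  · have he : (1 - r) / (1 - q) ≤ 0 := by
      apply div_nonpos_of_nonpos_of_nonneg <;> linarith
    have := Real.rpow_le_rpow_of_nonpos hpos1 ht12 he
    have hc : 1 / (1 - r) ≤ 0 := by
      apply div_nonpos_of_nonneg_of_nonpos <;> linarith
    exact mul_le_mul_of_nonpos_left (by linarith) hc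

end SMG
end

section
/- Let G₁ be a connected K-regular finite simple graph on n₁ vertices with K ≥ 1 and G₂ a connected S-regular finite simple graph on n₂ vertices with S ≥ 1, with Laplacian eigenvalues λ⁽¹⁾₁,…,λ⁽¹⁾_{n₁} and λ⁽²⁾₁,…,λ⁽²⁾_{n₂}. Let G = G₁ ⊗ G₂ be their Kronecker (tensor) product and let d be the degree sum of G. For real parameters q > 0, q ≠ 1 and r ≠ 1, the Sharma–Mittal entropy of G based on the Laplacian satisfies H_{q,r}(G) = (1/(1−r))·[(1/d)^{q(1−r)/(1−q)}·(Σ_{i=1}^{n₁} Σ_{j=1}^{n₂} (K·λ⁽²⁾ⱼ + S·λ⁽¹⁾ᵢ − λ⁽¹⁾ᵢ·λ⁽²⁾ⱼ)^q)^{(1−r)/(1−q)} − 1]. -/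
open Finset

namespace SMG

variable {V : Type*} [Fintype V] [DecidableEq V]

/-- The Laplacian matrix of a simple graph is Hermitian. -/
lemma lap_isHermitian (G : SimpleGraph V) [DecidableRel G.Adj] :
    (G.lapMatrix ℝ).IsHermitian :=
  (SimpleGraph.posSemidef_lapMatrix ℝ G).isHermitian

/-- The eigenvalues (with multiplicity) of the density matrix `ρ_L(G) = L(G)/d`,
namely `γ v = λ v / d`. -/
noncomputable def lapDensityEigen (G : SimpleGraph V) [DecidableRel G.Adj] : V → ℝ :=
  fun v => (lap_isHermitian G).eigenvalues v / (degSum G : ℝ)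

/-- Sharma–Mittal entropy of a graph based on its (combinatorial) Laplacian:
`H_{q,r}(G) = (1/(1-r)) * ((Σ γᵢ^q)^((1-r)/(1-q)) - 1)` with real powers. -/
noncomputable def lapSM (G : SimpleGraph V) [DecidableRel G.Adj] (q r : ℝ) : ℝ :=
  (1 / (1 - r)) *
    ((∑ v, lapDensityEigen G v ^ q) ^ ((1 - r) / (1 - q)) - 1)


/-- The Kronecker (tensor) product of two simple graphs: `(u,v) ~ (u',v')` iff
`u ~ u'` in `G₁` and `v ~ v'` in `G₂`. -/
def tensorProd {V₁ V₂ : Type*} (G₁ : SimpleGraph V₁) (G₂ : SimpleGraph V₂) :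
    SimpleGraph (V₁ × V₂) where
  Adj x y := G₁.Adj x.1 y.1 ∧ G₂.Adj x.2 y.2
  symm := ⟨fun _ _ h => ⟨h.1.symm, h.2.symm⟩⟩
  loopless := ⟨fun _ h => G₁.irrefl h.1⟩

instance {V₁ V₂ : Type*} (G₁ : SimpleGraph V₁) (G₂ : SimpleGraph V₂)
    [DecidableRel G₁.Adj] [DecidableRel G₂.Adj] :
    DecidableRel (tensorProd G₁ G₂).Adj := fun _ _ =>
  inferInstanceAs (Decidable (_ ∧ _))

section Aux

open Matrix Polynomial Kronecker

set_option linter.unusedSectionVars false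

/-- Conjugation by a unitary matrix preserves the characteristic polynomial. -/
lemma charpoly_conj {n : Type*} [Fintype n] [DecidableEq n]
    (U M : Matrix n n ℝ) (hU : U * star U = 1) :
    (U * M * star U).charpoly = M.charpoly := by
  unfold Matrix.charpoly
  have h1 : charmatrix (U * M * star U)
      = (U.map C) * charmatrix M * ((star U).map C) := by
    unfold Matrix.charmatrix
    simp only [_root_.map_mul, RingHom.mapMatrix_apply]
    rw [Matrix.mul_sub, Matrix.sub_mul]
    congr 1
    have h2 : (U.map (C : ℝ →+* ℝ[X])) * ((star U).map C) = 1 := by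
      rw [← Matrix.map_mul, hU]
      simp
    have h3 : Commute (Matrix.scalar n (X : ℝ[X])) ((star U).map C) := by
      apply Matrix.scalar_commute
      intro r; exact Commute.all _ _
    calc (Matrix.scalar n (X : ℝ[X]))
        = U.map C * ((star U).map C) * (Matrix.scalar n (X : ℝ[X])) := by rw [h2, one_mul]
      _ = U.map C * (Matrix.scalar n (X : ℝ[X])) * ((star U).map C) := by
          rw [mul_assoc, mul_assoc, h3.eq]
  rw [h1, Matrix.det_mul, Matrix.det_mul]
  have h2 : (U.map (C : ℝ →+* ℝ[X])).det * ((star U).map C).det = 1 := by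
    rw [← Matrix.det_mul, ← Matrix.map_mul, hU]
    simp
  calc ((U.map (C : ℝ →+* ℝ[X])).det) * (charmatrix M).det * (((star U).map C).det)
      = (U.map (C : ℝ →+* ℝ[X])).det * ((star U).map C).det * (charmatrix M).det := by ring
    _ = (charmatrix M).det := by rw [h2, one_mul]

lemma charpoly_diagonal {n : Type*} [Fintype n] [DecidableEq n] (d : n → ℝ) :
    (Matrix.diagonal d).charpoly = ∏ i, (X - C (d i)) := by
  unfold Matrix.charpoly
  have h : charmatrix (Matrix.diagonal d) = Matrix.diagonal (fun i => X - C (d i)) := by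
    ext i j
    by_cases h : i = j
    · subst h; simp [charmatrix_apply, Matrix.diagonal_apply_eq]
    · simp [charmatrix_apply, Matrix.diagonal_apply_ne _ h, h]
  rw [h, Matrix.det_diagonal]

lemma sum_comp_eq_of_prod_eq {n : Type*} [Fintype n] (a b : n → ℝ)
    (h : ∏ i, (X - C (a i)) = ∏ i, (X - C (b i))) (g : ℝ → ℝ) :
    ∑ i, g (a i) = ∑ i, g (b i) := by
  have hm : (Finset.univ.val.map a) = (Finset.univ.val.map b) := by
    have h1 : ((Finset.univ.val.map a).map (fun t => X - C t)).prod.roots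
        = ((Finset.univ.val.map b).map (fun t => X - C t)).prod.roots := by
      rw [Multiset.map_map, Multiset.map_map]
      simp only [Function.comp_def]
      exact congrArg Polynomial.roots h
    rwa [Polynomial.roots_multiset_prod_X_sub_C, Polynomial.roots_multiset_prod_X_sub_C] at h1
  calc ∑ i, g (a i) = ((Finset.univ.val.map a).map g).sum := by
        rw [Multiset.map_map]; simp only [Function.comp_def]; rfl
    _ = ((Finset.univ.val.map b).map g).sum := by rw [hm]
    _ = ∑ i, g (b i) := by rw [Multiset.map_map]; simp only [Function.comp_def]; rfl

/-- Real form of the spectral theorem. -/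
lemma spectral_real {n : Type*} [Fintype n] [DecidableEq n]
    {A : Matrix n n ℝ} (hA : A.IsHermitian) :
    A = (hA.eigenvectorUnitary : Matrix n n ℝ) * Matrix.diagonal hA.eigenvalues
      * star (hA.eigenvectorUnitary : Matrix n n ℝ) := by
  conv_lhs => rw [hA.spectral_theorem]
  rw [show Matrix.diagonal (RCLike.ofReal ∘ hA.eigenvalues) = Matrix.diagonal hA.eigenvalues by
        rw [RCLike.ofReal_real_eq_id]; rfl]
  rw [Unitary.conjStarAlgAut_apply]

lemma charpoly_eq_prod_eigen {n : Type*} [Fintype n] [DecidableEq n]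
    {A : Matrix n n ℝ} (hA : A.IsHermitian) :
    A.charpoly = ∏ i, (X - C (hA.eigenvalues i)) := by
  have hU := (Matrix.mem_unitaryGroup_iff).mp hA.eigenvectorUnitary.2
  conv_lhs => rw [spectral_real hA]
  rw [charpoly_conj _ _ hU, charpoly_diagonal]

lemma conj_smul_one {n : Type*} [Fintype n] [DecidableEq n]
    (U : Matrix n n ℝ) (hU : U * star U = 1) (c : ℝ) :
    c • (1 : Matrix n n ℝ) = U * (c • (1 : Matrix n n ℝ)) * star U := by
  rw [Matrix.mul_smul, Matrix.mul_one, Matrix.smul_mul, hU]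

lemma conj_sub {n : Type*} [Fintype n] (U M N W : Matrix n n ℝ) :
    U * (M - N) * W = U * M * W - U * N * W := by
  rw [Matrix.mul_sub, Matrix.sub_mul]

variable {V₁ V₂ : Type*} [Fintype V₁] [DecidableEq V₁] [Fintype V₂] [DecidableEq V₂]
  (G₁ : SimpleGraph V₁) (G₂ : SimpleGraph V₂) [DecidableRel G₁.Adj] [DecidableRel G₂.Adj]

lemma tensor_degree (u : V₁) (v : V₂) :
    (tensorProd G₁ G₂).degree (u, v) = G₁.degree u * G₂.degree v := by
  have h : (tensorProd G₁ G₂).neighborFinset (u, v)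
      = G₁.neighborFinset u ×ˢ G₂.neighborFinset v := by
    ext ⟨a, b⟩
    simp only [SimpleGraph.mem_neighborFinset, Finset.mem_product]
    exact Iff.rfl
  rw [← SimpleGraph.card_neighborFinset_eq_degree, h, Finset.card_product,
    SimpleGraph.card_neighborFinset_eq_degree, SimpleGraph.card_neighborFinset_eq_degree]

lemma tensor_adjMatrix :
    (tensorProd G₁ G₂).adjMatrix ℝ = (G₁.adjMatrix ℝ) ⊗ₖ (G₂.adjMatrix ℝ) := by
  ext ⟨a, b⟩ ⟨c, e⟩
  have hT : (tensorProd G₁ G₂).Adj (a, b) (c, e) ↔ G₁.Adj a c ∧ G₂.Adj b e := Iff.rfl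
  simp only [SimpleGraph.adjMatrix_apply, Matrix.kronecker_apply]
  by_cases h1 : G₁.Adj a c <;> by_cases h2 : G₂.Adj b e <;> simp [hT, h1, h2]

lemma adj_eq_smul_one_sub_lap {K : ℕ} (hreg : G₁.IsRegularOfDegree K) :
    G₁.adjMatrix ℝ = (K : ℝ) • (1 : Matrix V₁ V₁ ℝ) - G₁.lapMatrix ℝ := by
  have h : G₁.degMatrix ℝ = (K : ℝ) • (1 : Matrix V₁ V₁ ℝ) := by
    ext i j
    rcases eq_or_ne i j with rfl | hij
    · simp [SimpleGraph.degMatrix, hreg i]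
    · simp [SimpleGraph.degMatrix, Matrix.diagonal_apply_ne _ hij, Matrix.one_apply_ne hij]
  rw [SimpleGraph.lapMatrix, h, sub_sub_cancel]

lemma star_kronecker {m n : Type*} (A : Matrix m m ℝ) (B : Matrix n n ℝ) :
    star (A ⊗ₖ B) = star A ⊗ₖ star B := by
  ext ⟨a, b⟩ ⟨c, d⟩
  simp [Matrix.star_apply, Matrix.kronecker_apply]

end Aux

/-- Sharma–Mittal entropy of the Kronecker (tensor) product `G₁ ⊗ G₂` of a connected
`K`-regular graph and a connected `S`-regular graph, whose Laplacian eigenvalues are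
`K·λ⁽²⁾ⱼ + S·λ⁽¹⁾ᵢ − λ⁽¹⁾ᵢ·λ⁽²⁾ⱼ`. -/
theorem lapSM_tensorProd {V₁ V₂ : Type*}
    [Fintype V₁] [DecidableEq V₁] [Fintype V₂] [DecidableEq V₂]
    (G₁ : SimpleGraph V₁) (G₂ : SimpleGraph V₂) [DecidableRel G₁.Adj] [DecidableRel G₂.Adj]
    (K S : ℕ) (hK : 1 ≤ K) (hS : 1 ≤ S)
    (hG₁conn : G₁.Connected) (hG₂conn : G₂.Connected)
    (hG₁reg : G₁.IsRegularOfDegree K) (hG₂reg : G₂.IsRegularOfDegree S)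
    (q r : ℝ) (hq0 : 0 < q) (hq1 : q ≠ 1) (hr : r ≠ 1) :
    lapSM (tensorProd G₁ G₂) q r =
      (1 / (1 - r)) *
        ((1 / (degSum (tensorProd G₁ G₂) : ℝ)) ^ (q * (1 - r) / (1 - q)) *
          (∑ i, ∑ j,
            ((K : ℝ) * (lap_isHermitian G₂).eigenvalues j +
              (S : ℝ) * (lap_isHermitian G₁).eigenvalues i -
              (lap_isHermitian G₁).eigenvalues i * (lap_isHermitian G₂).eigenvalues j) ^ q)
            ^ ((1 - r) / (1 - q)) - 1) := by
  classical
  open Matrix Polynomial Kronecker in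
  haveI : Nonempty V₁ := hG₁conn.nonempty
  haveI : Nonempty V₂ := hG₂conn.nonempty
  set l1 := (lap_isHermitian G₁).eigenvalues with hl1
  set l2 := (lap_isHermitian G₂).eigenvalues with hl2
  set f : V₁ × V₂ → ℝ :=
    fun p => (K : ℝ) * l2 p.2 + (S : ℝ) * l1 p.1 - l1 p.1 * l2 p.2 with hf
  -- unitary diagonalization of the two Laplacians
  set U₁ := ((lap_isHermitian G₁).eigenvectorUnitary : Matrix V₁ V₁ ℝ) with hU₁def
  set U₂ := ((lap_isHermitian G₂).eigenvectorUnitary : Matrix V₂ V₂ ℝ) with hU₂def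
  have hU₁ : U₁ * star U₁ = 1 :=
    Matrix.mem_unitaryGroup_iff.mp (lap_isHermitian G₁).eigenvectorUnitary.2
  have hU₂ : U₂ * star U₂ = 1 :=
    Matrix.mem_unitaryGroup_iff.mp (lap_isHermitian G₂).eigenvectorUnitary.2
  have hA₁ : G₁.adjMatrix ℝ
      = U₁ * Matrix.diagonal (fun i => (K : ℝ) - l1 i) * star U₁ := by
    rw [adj_eq_smul_one_sub_lap _ hG₁reg, spectral_real (lap_isHermitian G₁),
      show Matrix.diagonal (fun i => (K : ℝ) - l1 i)
          = (K : ℝ) • (1 : Matrix V₁ V₁ ℝ) - Matrix.diagonal l1 by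
        rw [Matrix.smul_one_eq_diagonal, Matrix.diagonal_sub],
      conj_sub, ← conj_smul_one U₁ hU₁]
  have hA₂ : G₂.adjMatrix ℝ
      = U₂ * Matrix.diagonal (fun i => (S : ℝ) - l2 i) * star U₂ := by
    rw [adj_eq_smul_one_sub_lap _ hG₂reg, spectral_real (lap_isHermitian G₂),
      show Matrix.diagonal (fun i => (S : ℝ) - l2 i)
          = (S : ℝ) • (1 : Matrix V₂ V₂ ℝ) - Matrix.diagonal l2 by
        rw [Matrix.smul_one_eq_diagonal, Matrix.diagonal_sub],
      conj_sub, ← conj_smul_one U₂ hU₂]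
  set U : Matrix (V₁ × V₂) (V₁ × V₂) ℝ := U₁ ⊗ₖ U₂ with hUdef
  have hUst : star U = star U₁ ⊗ₖ star U₂ := star_kronecker _ _
  have hU : U * star U = 1 := by
    rw [hUst, hUdef, ← Matrix.mul_kronecker_mul, hU₁, hU₂, Matrix.one_kronecker_one]
  -- the Laplacian of the tensor product, diagonalized
  have hdeg : (tensorProd G₁ G₂).degMatrix ℝ
      = ((K * S : ℕ) : ℝ) • (1 : Matrix (V₁ × V₂) (V₁ × V₂) ℝ) := by
    ext i j
    rcases eq_or_ne i j with rfl | hij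
    · have h := tensor_degree G₁ G₂ i.1 i.2
      rw [hG₁reg, hG₂reg] at h
      simp [SimpleGraph.degMatrix, h]
    · simp [SimpleGraph.degMatrix, Matrix.diagonal_apply_ne _ hij, Matrix.one_apply_ne hij]
  have hL : (tensorProd G₁ G₂).lapMatrix ℝ = U * Matrix.diagonal f * star U := by
    have e2 : (G₁.adjMatrix ℝ) ⊗ₖ (G₂.adjMatrix ℝ)
        = U * Matrix.diagonal
            (fun p : V₁ × V₂ => ((K : ℝ) - l1 p.1) * ((S : ℝ) - l2 p.2)) * star U := by
      rw [hA₁, hA₂, Matrix.mul_kronecker_mul, Matrix.mul_kronecker_mul,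
        Matrix.diagonal_kronecker_diagonal, hUst, hUdef]
    have hdiagK : ((K * S : ℕ) : ℝ) • (1 : Matrix (V₁ × V₂) (V₁ × V₂) ℝ)
        - Matrix.diagonal (fun p : V₁ × V₂ => ((K : ℝ) - l1 p.1) * ((S : ℝ) - l2 p.2))
        = Matrix.diagonal f := by
      ext p p'
      rcases eq_or_ne p p' with rfl | hpp
      · simp only [Matrix.sub_apply, Matrix.smul_apply, Matrix.one_apply_eq,
          Matrix.diagonal_apply_eq, smul_eq_mul, mul_one, hf]
        push_cast
        ring
      · simp [Matrix.diagonal_apply_ne _ hpp, Matrix.one_apply_ne hpp]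
    rw [SimpleGraph.lapMatrix, hdeg, tensor_adjMatrix, e2,
      conj_smul_one U hU ((K * S : ℕ) : ℝ), ← conj_sub, hdiagK]
  -- transfer sums over eigenvalues
  have hcp : ((tensorProd G₁ G₂).lapMatrix ℝ).charpoly = (Matrix.diagonal f).charpoly := by
    rw [hL]; exact charpoly_conj _ _ hU
  have hprod : ∏ p : V₁ × V₂, (X - C ((lap_isHermitian (tensorProd G₁ G₂)).eigenvalues p))
      = ∏ p : V₁ × V₂, (X - C (f p)) := by
    rw [← charpoly_eq_prod_eigen (lap_isHermitian (tensorProd G₁ G₂)), hcp, charpoly_diagonal]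
  have hsum : ∑ p : V₁ × V₂, ((lap_isHermitian (tensorProd G₁ G₂)).eigenvalues p) ^ q
      = ∑ p : V₁ × V₂, (f p) ^ q :=
    sum_comp_eq_of_prod_eq _ _ hprod (fun t => t ^ q)
  -- positivity facts
  have hdn : 0 < degSum (tensorProd G₁ G₂) := by
    unfold degSum
    refine Finset.sum_pos (fun p _ => ?_) Finset.univ_nonempty
    have h := tensor_degree G₁ G₂ p.1 p.2
    rw [hG₁reg, hG₂reg] at h
    calc 0 < K * S := Nat.mul_pos hK hS
      _ = (tensorProd G₁ G₂).degree p := h.symm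
  have hd : (0 : ℝ) < (degSum (tensorProd G₁ G₂) : ℝ) := by exact_mod_cast hdn
  have heig : ∀ p : V₁ × V₂, 0 ≤ (lap_isHermitian (tensorProd G₁ G₂)).eigenvalues p :=
    fun p => (SimpleGraph.posSemidef_lapMatrix ℝ (tensorProd G₁ G₂)).eigenvalues_nonneg p
  -- entropy algebra
  have hsum1 : ∑ v, lapDensityEigen (tensorProd G₁ G₂) v ^ q
      = (∑ p : V₁ × V₂, ((lap_isHermitian (tensorProd G₁ G₂)).eigenvalues p) ^ q)
        / (degSum (tensorProd G₁ G₂) : ℝ) ^ q := by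
    rw [Finset.sum_div]
    refine Finset.sum_congr rfl fun p _ => ?_
    exact Real.div_rpow (heig p) hd.le q
  have hT' : ∑ p : V₁ × V₂, (f p) ^ q = ∑ i, ∑ j, (f (i, j)) ^ q :=
    Fintype.sum_prod_type _
  have hTnn : (0 : ℝ) ≤ ∑ p : V₁ × V₂, (f p) ^ q := by
    rw [← hsum]
    exact Finset.sum_nonneg fun p _ => Real.rpow_nonneg (heig p) q
  have key : (∑ v, lapDensityEigen (tensorProd G₁ G₂) v ^ q) ^ ((1 - r) / (1 - q))
      = (1 / (degSum (tensorProd G₁ G₂) : ℝ)) ^ (q * (1 - r) / (1 - q)) *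
          (∑ i, ∑ j, (f (i, j)) ^ q) ^ ((1 - r) / (1 - q)) := by
    rw [hsum1, hsum, Real.div_rpow hTnn (Real.rpow_nonneg hd.le q),
      ← Real.rpow_mul hd.le, mul_div_assoc,
      Real.div_rpow zero_le_one hd.le, Real.one_rpow, hT']
    ring
  rw [lapSM, key]

end SMG
end
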